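/- Let (v_n)_{n≥1} be a sequence of nonnegative reals with Σ_{n=1}^∞ v_n/n < ∞, and let δ > 0. Then there exists a strictly increasing sequence of positive integers (n_r)_{r≥1} such that Σ_{r=1}^∞ v_{n_r} < ∞, n_{r+1} ≤ (1+δ) n_r for all r ≥ 1, and √(1+δ) · n_{r−1} ≤ n_{r+1} for all r ≥ 2. -/

import Mathlib

open Filter Finset

/-- Subsequence selection lemma: if `v_n ≥ 0` and `Σ_{n≥1} v_n/n < ∞`, then for any `δ > 0`
there is a strictly increasing sequence `(n_r)_{r≥1}` of positive integers (here `nseq r`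
plays the role of `n_{r+1}`) with `Σ_r v_{n_r} < ∞`, `n_{r+1} ≤ (1+δ) n_r` for all `r ≥ 1`,
and `√(1+δ) n_{r-1} ≤ n_{r+1}` for all `r ≥ 2`. -/
theorem stmt8 (v : ℕ → ℝ) (hv : ∀ n, 0 ≤ v n)
    (hsum : Summable fun n : ℕ => v (n + 1) / ((n : ℝ) + 1))
    (δ : ℝ) (hδ : 0 < δ) :
    ∃ nseq : ℕ → ℕ, StrictMono nseq ∧ 1 ≤ nseq 0 ∧
      (Summable fun r : ℕ => v (nseq r)) ∧
      (∀ r : ℕ, (nseq (r + 1) : ℝ) ≤ (1 + δ) * nseq r) ∧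
      (∀ r : ℕ, Real.sqrt (1 + δ) * nseq r ≤ (nseq (r + 2) : ℝ)) := by
  set t : ℝ := Real.sqrt (1 + δ) with ht_def
  have ht2 : t ^ 2 = 1 + δ := Real.sq_sqrt (by linarith)
  have ht0 : 0 ≤ t := Real.sqrt_nonneg _
  have ht1 : 1 < t := by nlinarith
  set C : ℝ := 2 / (t - 1) with hC_def
  have hC : 0 < C := div_pos two_pos (by linarith)
  have hCt1 : C * (t - 1) = 2 := div_mul_cancel₀ 2 (by linarith)
  set a : ℕ → ℕ := fun r => ⌈C * t ^ r⌉₊ with ha_def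
  have htpow : ∀ r : ℕ, (1:ℝ) ≤ t ^ r := fun r => one_le_pow₀ ht1.le
  have hCt : ∀ r : ℕ, 0 < C * t ^ r := fun r => mul_pos hC (by positivity)
  have ha_lb : ∀ r, C * t ^ r ≤ (a r : ℝ) := fun r => Nat.le_ceil _
  have ha_ub : ∀ r, (a r : ℝ) < C * t ^ r + 1 := fun r => Nat.ceil_lt_add_one (hCt r).le
  have ha_pos : ∀ r, 1 ≤ a r := fun r => Nat.ceil_pos.mpr (hCt r)
  -- gap: C t^r + 2 ≤ C t^(r+1)
  have hgap : ∀ r : ℕ, C * t ^ r + 2 ≤ C * t ^ (r + 1) := by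
    intro r
    have h1 := htpow r
    have h2 : C * t ^ (r + 1) - C * t ^ r = (C * (t - 1)) * t ^ r := by ring
    nlinarith
  have hstep : ∀ r, a r + 1 < a (r + 1) := by
    intro r
    have h1 := ha_ub r
    have h2 := ha_lb (r + 1)
    have h3 := hgap r
    have : ((a r : ℝ) + 1) < (a (r + 1) : ℝ) := by linarith
    exact_mod_cast this
  have haSM : StrictMono a := strictMono_nat_of_lt_succ (fun n => by have := hstep n; omega)
  set B : ℕ → Finset ℕ := fun r => Finset.Icc (a r) (a (r + 1) - 1) with hB_def
  have hBne : ∀ r, (B r).Nonempty := by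
    intro r
    exact ⟨a r, Finset.mem_Icc.mpr ⟨le_refl _, by have := hstep r; omega⟩⟩
  choose nseq hmem hmin using fun r => Finset.exists_min_image (B r) v (hBne r)
  have hmem' : ∀ r, a r ≤ nseq r ∧ nseq r ≤ a (r + 1) - 1 := by
    intro r; exact Finset.mem_Icc.mp (hmem r)
  -- g n = v n / n
  set g : ℕ → ℝ := fun n => v n / n with hg_def
  have hg0 : ∀ n, 0 ≤ g n := fun n => div_nonneg (hv n) (Nat.cast_nonneg n)
  have hsg : Summable g := by
    rw [← summable_nat_add_iff 1]
    convert hsum using 2 with n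
    · rfl
    simp only [hg_def]
    push_cast
    ring
  set S : ℕ → ℝ := fun r => ∑ n ∈ B r, g n with hS_def
  have hS0 : ∀ r, 0 ≤ S r := fun r => Finset.sum_nonneg (fun n _ => hg0 n)
  set K : ℝ := C * t with hK_def
  have hK0 : 0 < K := mul_pos hC (by linarith)
  -- key bound  v (nseq r) ≤ K * S r
  have hkey : ∀ r, v (nseq r) ≤ K * S r := by
    intro r
    have hcard : (B r).card = a (r + 1) - a r := by
      simp only [hB_def, Nat.card_Icc]
      have := hstep r; omega
    have hcardR : ((B r).card : ℝ) = (a (r + 1) : ℝ) - (a r : ℝ) := by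
      rw [hcard]
      have : a r ≤ a (r + 1) := (haSM (Nat.lt_succ_self r)).le
      push_cast [this]; ring
    have hcardpos : (0:ℝ) < ((B r).card : ℝ) := by
      have := hstep r
      rw [hcardR]
      have : (a r : ℝ) < a (r + 1) := by exact_mod_cast haSM (Nat.lt_succ_self r)
      linarith
    set N : ℝ := (a (r + 1) : ℝ) - 1 with hN_def
    have h1 : v (nseq r) * (B r).card ≤ ∑ n ∈ B r, v n := by
      have := Finset.sum_le_sum (fun n hn => hmin r n hn)
      calc v (nseq r) * (B r).card = ∑ _n ∈ B r, v (nseq r) := by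
            rw [Finset.sum_const, nsmul_eq_mul]; ring
        _ ≤ ∑ n ∈ B r, v n := this
    have h2 : ∑ n ∈ B r, v n ≤ N * S r := by
      rw [hS_def, Finset.mul_sum]
      apply Finset.sum_le_sum
      intro n hn
      obtain ⟨hn1, hn2⟩ := Finset.mem_Icc.mp hn
      have hn0 : 1 ≤ n := le_trans (ha_pos r) hn1
      have hvn : v n = (n : ℝ) * g n := by
        simp only [hg_def]
        field_simp
      rw [hvn]
      apply mul_le_mul_of_nonneg_right _ (hg0 n)
      have : (n : ℝ) ≤ ((a (r+1) - 1 : ℕ) : ℝ) := by exact_mod_cast hn2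
      have hcast : ((a (r+1) - 1 : ℕ) : ℝ) = (a (r+1) : ℝ) - 1 := by
        have := ha_pos (r+1); push_cast [this]; ring
      rw [hN_def]; linarith [hcast ▸ this]
    have h3 : N ≤ K * (B r).card := by
      have hN_lt : N ≤ C * t ^ (r + 1) := by
        have := ha_ub (r + 1); rw [hN_def]; linarith
      have hcard_ge : t ^ r ≤ ((B r).card : ℝ) := by
        rw [hcardR]
        have h4 := ha_lb (r + 1)
        have h5 := ha_ub r
        have h6 : C * t ^ (r + 1) - C * t ^ r = 2 * t ^ r := by
          have : C * t ^ (r + 1) - C * t ^ r = (C * (t - 1)) * t ^ r := by ring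
          rw [this, hCt1]
        have := htpow r
        nlinarith
      calc N ≤ C * t ^ (r + 1) := hN_lt
        _ = K * t ^ r := by rw [hK_def]; ring
        _ ≤ K * (B r).card := mul_le_mul_of_nonneg_left hcard_ge hK0.le
    have h4 : v (nseq r) * (B r).card ≤ K * S r * (B r).card := by
      calc v (nseq r) * (B r).card ≤ N * S r := le_trans h1 h2
        _ ≤ K * (B r).card * S r := mul_le_mul_of_nonneg_right h3 (hS0 r)
        _ = K * S r * (B r).card := by ring
    exact le_of_mul_le_mul_right h4 hcardpos
  -- summability of S
  have hdisj : ∀ R : ℕ, (↑(Finset.range R) : Set ℕ).PairwiseDisjoint B := by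
    intro R r hr s hs hrs
    wlog h : r < s generalizing r s
    · exact (this hs hr hrs.symm (by omega)).symm
    simp only [Finset.disjoint_left, hB_def]
    intro x hx hx'
    obtain ⟨h1, h2⟩ := Finset.mem_Icc.mp hx
    obtain ⟨h3, h4⟩ := Finset.mem_Icc.mp hx'
    have h5 : a (r + 1) ≤ a s := haSM.le_iff_le.mpr (by omega)
    have := ha_pos (r + 1)
    omega
  have hSsum : Summable S := by
    apply summable_of_sum_range_le (c := ∑' n, g n) hS0
    intro R
    calc ∑ r ∈ Finset.range R, S r = ∑ n ∈ (Finset.range R).biUnion B, g n :=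
          (Finset.sum_biUnion (hdisj R)).symm
      _ ≤ ∑ n ∈ Finset.range (a R), g n := by
          apply Finset.sum_le_sum_of_subset_of_nonneg
          · intro n hn
            obtain ⟨r, hr, hnr⟩ := Finset.mem_biUnion.mp hn
            obtain ⟨h1, h2⟩ := Finset.mem_Icc.mp hnr
            have hr' : r + 1 ≤ R := Finset.mem_range.mp hr
            have : a (r + 1) ≤ a R := haSM.le_iff_le.mpr hr'
            have := ha_pos (r + 1)
            exact Finset.mem_range.mpr (by omega)
          · exact fun n _ _ => hg0 n
      _ ≤ ∑' n, g n := Summable.sum_le_tsum _ (fun n _ => hg0 n) hsg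
  refine ⟨nseq, ?_, ?_, ?_, ?_, ?_⟩
  · apply strictMono_nat_of_lt_succ
    intro r
    have h1 := (hmem' r).2
    have h2 := (hmem' (r + 1)).1
    have := hstep r
    omega
  · exact le_trans (ha_pos 0) (hmem' 0).1
  · exact Summable.of_nonneg_of_le (fun r => hv _) hkey (hSsum.mul_left K)
  · intro r
    have h1 : (nseq (r + 1) : ℝ) ≤ ((a (r + 2) - 1 : ℕ) : ℝ) := by
      exact_mod_cast (hmem' (r + 1)).2
    have hcast : ((a (r + 2) - 1 : ℕ) : ℝ) = (a (r + 2) : ℝ) - 1 := by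
      have := ha_pos (r + 2); push_cast [this]; ring
    have h2 := ha_ub (r + 2)
    have h3 : C * t ^ (r + 2) = (1 + δ) * (C * t ^ r) := by
      rw [← ht2]; ring
    have h4 := ha_lb r
    have h5 : (a r : ℝ) ≤ (nseq r : ℝ) := by exact_mod_cast (hmem' r).1
    have hδ1 : (0:ℝ) < 1 + δ := by linarith
    nlinarith
  · intro r
    have h1 : (nseq r : ℝ) ≤ (a (r + 1) : ℝ) - 1 := by
      have h := (hmem' r).2
      have hc : ((a (r + 1) - 1 : ℕ) : ℝ) = (a (r + 1) : ℝ) - 1 := by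
        have := ha_pos (r + 1); push_cast [this]; ring
      calc (nseq r : ℝ) ≤ ((a (r + 1) - 1 : ℕ) : ℝ) := by exact_mod_cast h
        _ = (a (r + 1) : ℝ) - 1 := hc
    have h2 := ha_ub (r + 1)
    have h3 := ha_lb (r + 2)
    have h4 : (a (r + 2) : ℝ) ≤ (nseq (r + 2) : ℝ) := by exact_mod_cast (hmem' (r + 2)).1
    have h5 : t * (C * t ^ (r + 1)) = C * t ^ (r + 2) := by ring
    nlinarith
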